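/- Let R be a finite commutative principal ideal ring and F a free submodule of R^n of rank r. Then there exists a matrix Z ∈ R^{n×(n−r)} whose columns are linearly independent over R, such that for all y ∈ R^n, y ∈ F if and only if y·Z = 0. -/

import Mathlib

set_option linter.unusedSectionVars false
set_option maxHeartbeats 1000000

section Aux

variable {R : Type*} [CommRing R] [Fintype R]

/-- In a finite commutative ring, an element with trivial annihilator is a unit. -/
lemma aux_isUnit_of_ann (d : R) (h : ∀ c : R, c * d = 0 → c = 0) : IsUnit d := by
  have hinj : Function.Injective (fun c : R => c * d) := by
    intro a b hab
    have h2 : (a - b) * d = 0 := by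
      simp only at hab
      rw [sub_mul, hab, sub_self]
    exact sub_eq_zero.mp (h (a-b) h2)
  have hsurj := Finite.injective_iff_surjective.mp hinj
  obtain ⟨x, hx⟩ := hsurj 1
  exact isUnit_iff_exists_inv.mpr ⟨x, by rw [mul_comm]; exact hx⟩

/-- shear automorphism: `y ↦ y + f y • u` when `f u = 0`. -/
def shear {M : Type*} [AddCommGroup M] [Module R M] (f : M →ₗ[R] R) (u : M)
    (hu : f u = 0) : M ≃ₗ[R] M :=
  LinearEquiv.ofLinear (LinearMap.id + f.smulRight u) (LinearMap.id - f.smulRight u)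
    (by ext y; simp [hu])
    (by ext y; simp [hu])

lemma shear_apply {M : Type*} [AddCommGroup M] [Module R M] (f : M →ₗ[R] R) (u : M)
    (hu : f u = 0) (y : M) : shear f u hu y = y + f y • u := rfl

/-- Linear version of `Equiv.piFinSucc`. -/
def splitL (n : ℕ) (R : Type*) [CommRing R] : (Fin (n + 1) → R) ≃ₗ[R] R × (Fin n → R) :=
  { (Fin.consEquiv fun _ : Fin (n + 1) => R).symm with
    map_add' := fun _ _ => rfl
    map_smul' := fun _ _ => rfl }

lemma splitL_apply (n : ℕ) (y : Fin (n+1) → R) : splitL n R y = (y 0, Fin.tail y) := rfl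

/-- Stable range 1 style row shortening for finite commutative rings. -/
lemma aux_SR1 {n : ℕ} (a : Fin (n + 2) → R)
    (ha : Ideal.span (Set.range a) = ⊤) :
    ∃ c : R, Ideal.span (Set.range (fun i : Fin (n + 1) =>
      a i.succ + (if i = 0 then c * a 0 else 0))) = ⊤ := by
  classical
  have : Finite (Ideal R) := Finite.of_injective _ SetLike.coe_injective
  -- S : set of maximal ideals containing all of the tail
  let S : Set (Ideal R) := {m | m.IsMaximal ∧ ∀ i : Fin (n + 1), a i.succ ∈ m}
  let T : Set (Ideal R) := {m | m.IsMaximal ∧ ¬ (∀ i : Fin (n + 1), a i.succ ∈ m)}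
  have hSfin : S.Finite := Set.toFinite S
  have hTfin : T.Finite := Set.toFinite T
  let I : Ideal R := hSfin.toFinset.inf id
  let J : Ideal R := hTfin.toFinset.inf id
  have hsup : I ⊔ J = ⊤ := by
    by_contra hne
    obtain ⟨m, hm, hle⟩ := Ideal.exists_le_maximal _ hne
    have hI : I ≤ m := le_trans le_sup_left hle
    have hJ : J ≤ m := le_trans le_sup_right hle
    obtain ⟨m1, hm1, hm1le⟩ := (Ideal.IsPrime.inf_le' hm.isPrime).mp hI
    obtain ⟨m2, hm2, hm2le⟩ := (Ideal.IsPrime.inf_le' hm.isPrime).mp hJ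
    rw [Set.Finite.mem_toFinset] at hm1 hm2
    have e1 : m1 = m := hm1.1.eq_of_le hm.ne_top hm1le
    have e2 : m2 = m := hm2.1.eq_of_le hm.ne_top hm2le
    exact hm2.2 (e2 ▸ e1 ▸ hm1.2)
  obtain ⟨x, hx, y, hy, hxy⟩ := Submodule.mem_sup.mp (hsup ▸ Submodule.mem_top (x := (1:R)))
  refine ⟨y, ?_⟩
  by_contra hne
  obtain ⟨m, hm, hle⟩ := Ideal.exists_le_maximal _ hne
  have hmem : ∀ i : Fin (n+1), a i.succ + (if i = 0 then y * a 0 else 0) ∈ m := fun i =>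
    hle (Ideal.subset_span ⟨i, rfl⟩)
  by_cases hS : ∀ i : Fin (n + 1), a i.succ ∈ m
  · -- m ∈ S : a 0 ∉ m, y ∉ m, contradiction with b 0 ∈ m
    have hmS : m ∈ S := ⟨hm, hS⟩
    have ha0 : a 0 ∉ m := by
      intro h0
      have : Ideal.span (Set.range a) ≤ m := by
        rw [Ideal.span_le]
        rintro _ ⟨i, rfl⟩
        cases i using Fin.cases with
        | zero => exact h0
        | succ i => exact hS i
      rw [ha] at this
      exact hm.ne_top (top_le_iff.mp this)
    have hxm : x ∈ m :=
      (Finset.inf_le (f := id) ((Set.Finite.mem_toFinset hSfin).mpr hmS)) hx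
    have hyne : y ∉ m := by
      intro hym
      exact hm.ne_top (Ideal.eq_top_of_isUnit_mem m (hxy ▸ m.add_mem hxm hym) isUnit_one)
    have h0 := hmem 0
    simp only [if_pos rfl] at h0
    have hya0 : y * a 0 ∈ m := (Ideal.add_mem_iff_right m (hS 0)).mp h0
    rcases (Ideal.IsPrime.mem_or_mem hm.isPrime hya0) with h | h
    · exact hyne h
    · exact ha0 h
  · -- m ∈ T : y ∈ m
    have hmT : m ∈ T := ⟨hm, hS⟩
    have hyJ : y ∈ m := (Finset.inf_le (f := id) ((Set.Finite.mem_toFinset hTfin).mpr hmT)) hy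
    push_neg at hS
    obtain ⟨i, hi⟩ := hS
    have := hmem i
    by_cases h0 : i = 0
    · subst h0
      exact hi (by simpa using (by
        have : y * a 0 ∈ m := Ideal.mul_mem_right _ m hyJ
        have h2 := hmem 0
        simp only [if_pos rfl] at h2
        exact (Ideal.add_mem_iff_left m this).mp (by rwa [add_comm] at h2)))
    · simp only [if_neg h0, add_zero] at this
      exact hi this

/-- Splitting off a unimodular functional. -/
lemma aux_split : ∀ {n : ℕ} (a : Fin (n+1) → R), Ideal.span (Set.range a) = ⊤ →
    ∃ e : (Fin (n+1) → R) ≃ₗ[R] (Fin n → R) × R, ∀ y, (e y).2 = ∑ i, a i * y i := by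
  intro n
  induction n with
  | zero =>
    intro a ha
    have heq0 : ∀ i : Fin (0+1), i = 0 := fun i => Fin.eq_zero i
    have : IsUnit (a 0) := by
      have hr : Set.range a = {a 0} := by
        ext x
        constructor
        · rintro ⟨i, rfl⟩; rw [heq0 i]; rfl
        · rintro rfl; exact ⟨0, rfl⟩
      rw [hr, Ideal.span_singleton_eq_top] at ha
      exact ha
    obtain ⟨u, hu⟩ := this
    refine ⟨{ toFun := fun y => (0, a 0 * y 0),
              invFun := fun p => fun _ => ((u⁻¹ : Rˣ) : R) * p.2,
              map_add' := by intro x y; simp [mul_add],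
              map_smul' := by intro m x; simp [Prod.smul_def]; ring,
              left_inv := by
                intro y; funext i
                rw [heq0 i]
                simp [← hu, ← mul_assoc],
              right_inv := by
                intro p
                refine Prod.ext (Subsingleton.elim _ _) ?_
                simp [← hu, ← mul_assoc] }, ?_⟩
    intro y
    simp [Fin.sum_univ_succ]
  | succ n IH =>
    intro a ha
    obtain ⟨c, hb⟩ := aux_SR1 a ha
    set b : Fin (n+1) → R := fun i => a i.succ + (if i = 0 then c * a 0 else 0) with hbdef
    obtain ⟨e', he'⟩ := IH b hb
    have h1 : (1 : R) ∈ Ideal.span (Set.range b) := hb ▸ Submodule.mem_top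
    obtain ⟨d, hd⟩ := (Submodule.mem_span_range_iff_exists_fun (R := R)).mp h1
    have hd' : ∑ i, d i * b i = 1 := by simpa [smul_eq_mul] using hd
    -- shears
    have hu1 : (LinearMap.proj (R := R) (φ := fun _ : Fin (n+2) => R) 1)
        ((-c) • Pi.single (M := fun _ : Fin (n+2) => R) (0 : Fin (n+2)) (1:R)) = 0 := by
      simp [Pi.single_apply]
    set α := shear (LinearMap.proj (R := R) (φ := fun _ : Fin (n+2) => R) 1) ((-c) • Pi.single (M := fun _ : Fin (n+2) => R) (0 : Fin (n+2)) (1:R)) hu1 with hα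
    set v : Fin (n+2) → R := Fin.cons (α := fun _ : Fin (n+2) => R) (0:R) (fun i : Fin (n+1) => d i * a 0) with hv
    have hu2 : (LinearMap.proj (R := R) (φ := fun _ : Fin (n+2) => R) 0) v = 0 := rfl
    set β := shear (LinearMap.proj (R := R) (φ := fun _ : Fin (n+2) => R) 0) v hu2 with hβ
    refine ⟨α.trans (β.trans ((splitL (n+1) R).trans
      (((LinearEquiv.refl R R).prodCongr e').trans
        ((LinearEquiv.prodAssoc R R (Fin n → R) R).symm.trans
          (((splitL n R).symm.prodCongr (LinearEquiv.refl R R))))))), ?_⟩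
    intro y
    have key : ∀ i : Fin (n+1), (β (α y)) i.succ
        = y i.succ + (y 0 - c * y 1) * (d i * a 0) := by
      intro i
      rw [hβ, shear_apply, hα, shear_apply]
      simp [hv, Pi.single_apply, Fin.cons_succ, Fin.succ_ne_zero]
      ring
    have snd_eq : ((α.trans (β.trans ((splitL (n+1) R).trans
      (((LinearEquiv.refl R R).prodCongr e').trans
        ((LinearEquiv.prodAssoc R R (Fin n → R) R).symm.trans
          (((splitL n R).symm.prodCongr (LinearEquiv.refl R R)))))))) y).2
        = (e' (Fin.tail (β (α y)))).2 := rfl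
    rw [snd_eq, he']
    have : ∀ i : Fin (n+1), Fin.tail (β (α y)) i = y i.succ + (y 0 - c * y 1) * (d i * a 0) :=
      fun i => key i
    calc ∑ i, b i * Fin.tail (β (α y)) i
        = ∑ i, (b i * y i.succ + (d i * b i) * ((y 0 - c * y 1) * a 0)) := by
          refine Finset.sum_congr rfl (fun i _ => ?_)
          rw [this i]; ring
      _ = (∑ i, b i * y i.succ) + (∑ i, d i * b i) * ((y 0 - c * y 1) * a 0) := by
          rw [Finset.sum_add_distrib, Finset.sum_mul]
      _ = (∑ i, b i * y i.succ) + (y 0 - c * y 1) * a 0 := by rw [hd', one_mul]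
      _ = ∑ i : Fin (n+2), a i * y i := by
          rw [Fin.sum_univ_succ (f := fun i : Fin (n+2) => a i * y i), hbdef]
          simp only [add_mul, Finset.sum_add_distrib, ite_mul, zero_mul]
          rw [Finset.sum_ite_eq' Finset.univ (0 : Fin (n+1)) (fun i => c * a 0 * y i.succ)]
          simp only [Finset.mem_univ, if_pos, Fin.succ_zero_eq_one]
          ring

end Aux

section Main

variable {R : Type*} [CommRing R] [Fintype R] [IsPrincipalIdealRing R]

lemma aux_main : ∀ (r n : ℕ), r ≤ n → ∀ (F : Submodule R (Fin n → R)),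
    Nonempty (Module.Basis (Fin r) R F) →
    ∃ g : (Fin n → R) →ₗ[R] (Fin (n - r) → R), Function.Surjective g ∧ LinearMap.ker g = F := by
  intro r
  induction r with
  | zero =>
    intro n _ F ⟨b⟩
    have hFbot : F = ⊥ := by
      rw [Submodule.eq_bot_iff]
      intro x hx
      have hsub : Subsingleton F := ⟨fun p q => by
        have := b.repr.injective (Subsingleton.elim (b.repr p) (b.repr q)); exact this⟩
      have : (⟨x, hx⟩ : F) = (0 : F) := Subsingleton.elim _ _
      exact congrArg Subtype.val this
    let e : (Fin n → R) ≃ₗ[R] (Fin (n - 0) → R) :=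
      LinearEquiv.funCongrLeft R R (finCongr (Nat.sub_zero n))
    exact ⟨e.toLinearMap, e.surjective, by rw [LinearMap.ker_eq_bot.mpr e.injective, hFbot]⟩
  | succ r IH =>
    intro n hrn F ⟨b⟩
    -- the basis as a family in R^n
    set w : Fin (r+1) → (Fin n → R) := fun j => ((b j : F) : Fin n → R) with hwdef
    have hw : LinearIndependent R w := b.linearIndependent.map' F.subtype F.ker_subtype
    set v0 : Fin n → R := w 0 with hv0
    -- v0 has trivial scalar annihilator
    have hann : ∀ c : R, c • v0 = 0 → c = 0 := by
      intro c hc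
      have := linearIndependent_iff'.mp hw {0} (fun _ => c) (by
        rw [Finset.sum_singleton]; exact hc) 0 (Finset.mem_singleton_self 0)
      exact this
    -- the coordinates of v0 generate the unit ideal
    have hIone : ∃ cvec : Fin n → R, ∑ i, cvec i * v0 i = 1 := by
      obtain ⟨d, hd⟩ := (IsPrincipalIdealRing.principal (Ideal.span (Set.range v0))).principal
      have hdann : ∀ c : R, c * d = 0 → c = 0 := by
        intro c hcd
        refine hann c ?_
        funext i
        have hvi : v0 i ∈ Ideal.span (Set.range v0) := Ideal.subset_span ⟨i, rfl⟩
        rw [hd] at hvi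
        obtain ⟨t, ht⟩ := Submodule.mem_span_singleton.mp hvi
        show c * v0 i = 0
        rw [← ht, smul_eq_mul, show c * (t * d) = t * (c * d) by ring, hcd, mul_zero]
      have hdu : IsUnit d := aux_isUnit_of_ann d hdann
      have htop : Ideal.span (Set.range v0) = ⊤ := by
        rw [hd]
        exact Ideal.span_singleton_eq_top.mpr hdu
      have h1 : (1 : R) ∈ Ideal.span (Set.range v0) := htop ▸ Submodule.mem_top
      obtain ⟨cv, hcv⟩ := (Submodule.mem_span_range_iff_exists_fun (R := R)).mp h1
      exact ⟨cv, by simpa [smul_eq_mul] using hcv⟩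
    obtain ⟨cvec, hcvec⟩ := hIone
    -- trivial ring case when n = 0
    cases n with
    | zero =>
      have h10 : (1 : R) = 0 := by rw [← hcvec]; simp
      have hsR : Subsingleton R := subsingleton_of_zero_eq_one h10.symm
      have hsM : Subsingleton (Fin 0 → R) := by infer_instance
      refine ⟨0, fun z => ⟨0, Subsingleton.elim _ _⟩, ?_⟩
      · have : ∀ (G G' : Submodule R (Fin 0 → R)), G = G' := fun G G' => by
          refine le_antisymm (fun x hx => ?_) (fun x hx => ?_) <;>
          · have hx0 : x = 0 := Subsingleton.elim x 0
            rw [hx0]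
            exact Submodule.zero_mem _
        exact this _ _
    | succ N =>
      -- cvec is unimodular
      have hcu : Ideal.span (Set.range cvec) = ⊤ := by
        rw [Ideal.eq_top_iff_one, ← hcvec]
        exact Ideal.sum_mem _ (fun i _ =>
          Ideal.mul_mem_right _ _ (Ideal.subset_span ⟨i, rfl⟩))
      obtain ⟨e, he⟩ := aux_split cvec hcu
      have hev0 : (e v0).2 = 1 := by rw [he]; exact hcvec
      -- shear on the product to send v0 to (0,1)
      have hu0 : (LinearMap.snd R (Fin N → R) R) (-(e v0).1, (0:R)) = 0 := rfl
      set γ := shear (LinearMap.snd R (Fin N → R) R) (-(e v0).1, (0:R)) hu0 with hγ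
      set E := e.trans γ with hE
      have hEv0 : E v0 = (0, 1) := by
        rw [hE]
        show γ (e v0) = (0, 1)
        rw [hγ, shear_apply]
        have : e v0 = ((e v0).1, 1) := by rw [← hev0]
        rw [this]
        simp
      have hEsnd : ∀ y, (E y).2 = (e y).2 := by
        intro y
        rw [hE]
        show (γ (e y)).2 = (e y).2
        rw [hγ, shear_apply]
        simp
      -- images of the rest of the basis
      set u : Fin r → (Fin N → R) := fun i => (E (w i.succ)).1 with hudef
      set sc : Fin r → R := fun i => (E (w i.succ)).2 with hscdef
      have hEw : ∀ i : Fin r, E (w i.succ) = (u i, sc i) := fun i => rfl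
      -- u is linearly independent
      have huind : LinearIndependent R u := by
        rw [Fintype.linearIndependent_iff]
        intro g hg
        set t : R := ∑ i, g i * sc i with htdef
        have hsum : (∑ i, g i • w i.succ) - t • v0 = 0 := by
          apply E.injective
          rw [map_sub, map_sum, map_zero]
          simp_rw [map_smul, hEw, hEv0]
          rw [Prod.ext_iff]
          constructor
          · simp only [Prod.fst_sub, Prod.fst_sum, Prod.smul_fst, Prod.fst_zero, smul_zero]
            simpa using hg
          · simp only [Prod.snd_sub, Prod.snd_sum, Prod.smul_snd, Prod.snd_zero]
            simp [htdef, smul_eq_mul]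
        intro i
        have hGcoef := Fintype.linearIndependent_iff.mp hw
          (Fin.cases (-t) g) (by
            rw [Fin.sum_univ_succ]
            simp only [Fin.cases_zero, Fin.cases_succ]
            calc (-t) • w 0 + ∑ i, g i • w i.succ
                = (∑ i, g i • w i.succ) - t • w 0 := by rw [neg_smul]; abel
              _ = 0 := hsum)
        simpa using hGcoef i.succ
      -- the span of u, with its basis
      set Ft : Submodule R (Fin N → R) := Submodule.span R (Set.range u) with hFt
      have hFtb : Nonempty (Module.Basis (Fin r) R Ft) := ⟨Module.Basis.span huind⟩
      obtain ⟨g', hg'surj, hg'ker⟩ := IH N (Nat.le_of_succ_le_succ hrn) Ft hFtb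
      -- assemble the final map
      let cast1 : (Fin (N - r) → R) ≃ₗ[R] (Fin (N + 1 - (r+1)) → R) :=
        LinearEquiv.funCongrLeft R R (finCongr (by omega))
      refine ⟨cast1.toLinearMap ∘ₗ g' ∘ₗ (LinearMap.fst R (Fin N → R) R) ∘ₗ E.toLinearMap,
        ?_, ?_⟩
      · intro z
        obtain ⟨x, hx⟩ := hg'surj (cast1.symm z)
        obtain ⟨y, hy⟩ := E.surjective (x, 0)
        refine ⟨y, ?_⟩
        simp only [LinearMap.coe_comp, Function.comp_apply, LinearEquiv.coe_coe, hy,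
          LinearMap.fst_apply, hx]
        exact cast1.apply_symm_apply z
      · -- kernel is F
        have hFspan : F = Submodule.span R (Set.range w) := by
          have := b.span_eq
          have h2 := congrArg (Submodule.map F.subtype) this
          rw [Submodule.map_span, Submodule.map_top, Submodule.range_subtype] at h2
          rw [← h2]
          congr 1
          rw [← Set.range_comp]
          rfl
        ext y
        simp only [LinearMap.mem_ker, LinearMap.coe_comp, Function.comp_apply,
          LinearEquiv.coe_coe, LinearMap.fst_apply]
        rw [EmbeddingLike.map_eq_zero_iff (f := cast1)]
        rw [← LinearMap.mem_ker, hg'ker]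
        constructor
        · -- (E y).1 ∈ Ft → y ∈ F
          intro hmem
          obtain ⟨aa, haa⟩ := (Submodule.mem_span_range_iff_exists_fun (R := R)).mp hmem
          set t : R := (E y).2 - ∑ i, aa i * sc i with htdef
          have hyf : y = (∑ i, aa i • w i.succ) + t • v0 := by
            apply E.injective
            rw [map_add, map_sum, map_smul, hEv0]
            simp_rw [map_smul, hEw]
            rw [Prod.ext_iff]
            constructor
            · simp only [Prod.fst_add, Prod.fst_sum, Prod.smul_fst, smul_zero, add_zero]
              rw [← haa]
            · simp only [Prod.snd_add, Prod.snd_sum, Prod.smul_snd, smul_eq_mul, mul_one]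
              rw [htdef]
              ring
          rw [hyf]
          refine F.add_mem (Submodule.sum_mem F (fun i _ => F.smul_mem _ ?_))
            (F.smul_mem _ ?_)
          · exact (b i.succ).2
          · exact (b 0).2
        · -- y ∈ F → (E y).1 ∈ Ft
          intro hy
          rw [hFspan] at hy
          obtain ⟨G, hG⟩ := (Submodule.mem_span_range_iff_exists_fun (R := R)).mp hy
          have : (E y).1 = ∑ i, G i.succ • u i := by
            rw [← hG, map_sum]
            rw [Fin.sum_univ_succ, Prod.fst_add, Prod.fst_sum]
            simp_rw [map_smul]
            rw [hEv0]
            simp_rw [hEw]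
            simp
          rw [this]
          exact Submodule.sum_mem _ (fun i _ => Submodule.smul_mem _ _
            (Submodule.subset_span ⟨i, rfl⟩))

end Main

/-- A free rank-`r` submodule of `R^n` over a finite commutative principal ideal
ring is the kernel of right multiplication by an `n × (n-r)` matrix with linearly
independent columns. -/
theorem stmt7 (R : Type*) [CommRing R] [Fintype R] [IsPrincipalIdealRing R]
    (n r : ℕ) (hr : r ≤ n) (F : Submodule R (Fin n → R))
    (hF : Nonempty (Module.Basis (Fin r) R F)) :
    ∃ Z : Matrix (Fin n) (Fin (n - r)) R,
      LinearIndependent R Z.transpose ∧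
      ∀ y : Fin n → R, y ∈ F ↔ Matrix.vecMul y Z = 0 := by
  obtain ⟨g, hgsurj, hgker⟩ := aux_main r n hr F hF
  set Z : Matrix (Fin n) (Fin (n - r)) R := Matrix.of (fun i j => g (Pi.single i 1) j) with hZ
  have hvm : ∀ y : Fin n → R, Matrix.vecMul y Z = g y := by
    intro y
    funext j
    have hy : y = ∑ i, y i • Pi.single (M := fun _ : Fin n => R) i (1 : R) := by
      funext k
      rw [Finset.sum_apply]
      simp [Pi.single_apply, eq_comm]
    calc Matrix.vecMul y Z j = ∑ i, y i * g (Pi.single i 1) j := by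
          simp [Matrix.vecMul, dotProduct, hZ]
      _ = g y j := by
          conv_rhs => rw [hy]
          rw [map_sum, Finset.sum_apply]
          simp
  refine ⟨Z, ?_, ?_⟩
  · refine Fintype.linearIndependent_iff.mpr ?_
    intro aco haco j0
    obtain ⟨y0, hy0⟩ := hgsurj (Pi.single j0 1)
    have h1 : ∀ i : Fin n, ∑ j, aco j * Z i j = 0 := by
      intro i
      have := congrFun haco i
      rw [Finset.sum_apply] at this
      simpa using this
    have h2 : ∑ j, aco j * g y0 j = 0 := by
      have : ∑ j, aco j * g y0 j = ∑ j, aco j * Matrix.vecMul y0 Z j := by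
        rw [hvm y0]
      rw [this]
      have hswap : ∑ j, aco j * Matrix.vecMul y0 Z j
          = ∑ i, y0 i * (∑ j, aco j * Z i j) := by
        simp only [Matrix.vecMul, dotProduct]
        calc ∑ x, aco x * ∑ i, y0 i * Z i x
            = ∑ x, ∑ i, aco x * (y0 i * Z i x) := by simp_rw [Finset.mul_sum]
          _ = ∑ i, ∑ x, aco x * (y0 i * Z i x) := Finset.sum_comm
          _ = ∑ i, y0 i * (∑ j, aco j * Z i j) := by
              refine Finset.sum_congr rfl (fun i _ => ?_)
              rw [Finset.mul_sum]
              exact Finset.sum_congr rfl (fun j _ => by ring)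
      rw [hswap]
      simp only [h1, mul_zero, Finset.sum_const_zero]
    rw [hy0] at h2
    have : ∑ j, aco j * Pi.single (M := fun _ : Fin (n-r) => R) j0 (1:R) j = aco j0 := by
      simp [Pi.single_apply]
    rw [this] at h2
    exact h2
  · intro y
    rw [hvm y, ← LinearMap.mem_ker, hgker]
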